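/- arXiv:1812.04436 — 6 statements merged into one kernel-verified Lean document; each statement's English description precedes it below -/
import Mathlib

section
/- Let n ≥ 2, let x_1, …, x_n be strictly positive real numbers and let s ≥ 0. Then the iterated integral ∫_0^∞ x_1 e^{-x_1 u_1} ( ∫_{u_1 + s x_1}^∞ x_2 e^{-x_2 u_2} ( ⋯ ( ∫_{u_{n-1} + s x_{n-1}}^∞ x_n e^{-x_n u_n} du_n ) ⋯ ) du_2 ) du_1, in which for each i ≥ 2 the variable u_i ranges over (u_{i-1} + s·x_{i-1}, ∞), equals ∏_{i=1}^{n-1} ( x_i / (Σ_{j=i}^n x_j) ) · e^{- s · x_i · Σ_{j=i+1}^n x_j }. -/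
open MeasureTheory Real

/-- The nested iterated integral: `nestedInt s x i k a` integrates `k` successive
exponential densities with rates `x i, x (i+1), …, x (i+k-1)`, the innermost first;
the outermost variable ranges over `(a, ∞)` and each subsequent variable ranges over
`(previous variable + s * previous rate, ∞)`. -/
noncomputable def nestedInt (s : ℝ) (x : ℕ → ℝ) : ℕ → ℕ → ℝ → ℝ
  | _, 0, _ => 1
  | i, k + 1, a =>
      ∫ u in Set.Ioi a, x i * Real.exp (-(x i * u)) * nestedInt s x (i + 1) k (u + s * x i)

lemma aux_integral_exp_neg_mul_Ioi {b : ℝ} (hb : 0 < b) (a : ℝ) :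
    ∫ u in Set.Ioi a, Real.exp (-(b * u)) = Real.exp (-(b * a)) / b := by
  have hderiv : ∀ u ∈ Set.Ici a,
      HasDerivAt (fun u => -Real.exp (-(b * u)) / b) (Real.exp (-(b * u))) u := by
    intro u _
    have h1 : HasDerivAt (fun u : ℝ => -(b * u)) (-b) u := by
      simpa [Pi.neg_def] using ((hasDerivAt_id u).const_mul b).neg
    have h2 : HasDerivAt (fun u => -Real.exp (-(b * u)) / b) (-(Real.exp (-(b * u)) * -b) / b) u :=
      (h1.exp.neg.div_const b)
    convert h2 using 1
    field_simp
  have hint : IntegrableOn (fun u => Real.exp (-(b * u))) (Set.Ioi a) := by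
    simpa [neg_mul] using exp_neg_integrableOn_Ioi a hb
  have htend : Filter.Tendsto (fun u => -Real.exp (-(b * u)) / b) Filter.atTop (nhds 0) := by
    have : Filter.Tendsto (fun u : ℝ => Real.exp (-(b * u))) Filter.atTop (nhds 0) := by
      apply Real.tendsto_exp_atBot.comp
      have := Filter.tendsto_id.const_mul_atTop_of_neg (neg_neg_iff_pos.2 hb) (f := fun u : ℝ => u)
      simpa [neg_mul] using this
    simpa using (this.neg.div_const b)
  have := integral_Ioi_of_hasDerivAt_of_tendsto' hderiv hint htend
  rw [this]
  ring

lemma nestedInt_closed_form (s : ℝ) (x : ℕ → ℝ) :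
    ∀ k i a, (∀ j, i ≤ j → j < i + k → 0 < x j) →
      nestedInt s x i k a =
        Real.exp (-(∑ j ∈ Finset.Ico i (i + k), x j) * a) *
          ∏ m ∈ Finset.Ico i (i + k - 1),
            (x m / ∑ j ∈ Finset.Ico m (i + k), x j) *
              Real.exp (-(s * x m * ∑ j ∈ Finset.Ico (m + 1) (i + k), x j)) := by
  intro k
  induction k with
  | zero => intro i a _; simp [nestedInt]
  | succ k ih =>
    intro i a hpos
    have hxi : 0 < x i := hpos i le_rfl (by omega)
    have hik : i + 1 + k = i + (k + 1) := by omega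
    set T := ∑ j ∈ Finset.Ico (i + 1) (i + (k + 1)), x j with hT
    set P := ∏ m ∈ Finset.Ico (i + 1) (i + k),
        (x m / ∑ j ∈ Finset.Ico m (i + (k + 1)), x j) *
          Real.exp (-(s * x m * ∑ j ∈ Finset.Ico (m + 1) (i + (k + 1)), x j)) with hP
    have hT0 : 0 ≤ T := Finset.sum_nonneg fun j hj => by
      rw [Finset.mem_Ico] at hj
      exact (hpos j (by omega) (by omega)).le
    have hS : 0 < x i + T := by linarith
    have hinner : ∀ u : ℝ, nestedInt s x (i + 1) k (u + s * x i) =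
        Real.exp (-T * (u + s * x i)) * P := by
      intro u
      have := ih (i + 1) (u + s * x i) (fun j h1 h2 => hpos j (by omega) (by omega))
      rw [this, hik, show i + (k + 1) - 1 = i + k from by omega]
    have hpt : ∀ u : ℝ, x i * Real.exp (-(x i * u)) * nestedInt s x (i + 1) k (u + s * x i) =
        (x i * Real.exp (-(s * x i * T)) * P) * Real.exp (-((x i + T) * u)) := by
      intro u
      rw [hinner u]
      have harg : (-(x i * u)) + (-T * (u + s * x i)) =
          (-(s * x i * T)) + (-((x i + T) * u)) := by ring
      calc x i * Real.exp (-(x i * u)) * (Real.exp (-T * (u + s * x i)) * P)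
          = (x i * P) * Real.exp ((-(x i * u)) + (-T * (u + s * x i))) := by
            rw [Real.exp_add]; ring
        _ = (x i * P) * Real.exp ((-(s * x i * T)) + (-((x i + T) * u))) := by rw [harg]
        _ = (x i * Real.exp (-(s * x i * T)) * P) * Real.exp (-((x i + T) * u)) := by
            rw [Real.exp_add]; ring
    have hSum : ∑ j ∈ Finset.Ico i (i + (k + 1)), x j = x i + T := by
      rw [hT, Finset.sum_eq_sum_Ico_succ_bot (by omega : i < i + (k + 1))]
    rw [show nestedInt s x i (k + 1) a =
        ∫ u in Set.Ioi a, x i * Real.exp (-(x i * u)) * nestedInt s x (i + 1) k (u + s * x i)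
        from rfl]
    simp_rw [hpt]
    rw [MeasureTheory.integral_const_mul, aux_integral_exp_neg_mul_Ioi hS a, hSum]
    rcases Nat.eq_zero_or_pos k with hk | hk
    · subst hk
      have hTz : T = 0 := by simp [hT]
      have hPz : P = 1 := by simp [hP]
      rw [hTz, hPz]
      simp
      field_simp
    · have hsplit : ∏ m ∈ Finset.Ico i (i + (k + 1) - 1),
          (x m / ∑ j ∈ Finset.Ico m (i + (k + 1)), x j) *
            Real.exp (-(s * x m * ∑ j ∈ Finset.Ico (m + 1) (i + (k + 1)), x j)) =
          ((x i / (x i + T)) * Real.exp (-(s * x i * T))) * P := by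
        rw [show i + (k + 1) - 1 = i + k from by omega,
          Finset.prod_eq_prod_Ico_succ_bot (by omega : i < i + k), hSum]
      rw [hsplit]
      field_simp

/-- for `n ≥ 2`, positive rates `x 0, …, x (n-1)` and `s ≥ 0`, the iterated
integral `∫_0^∞ x_1 e^{-x_1 u_1} ∫_{u_1+s x_1}^∞ x_2 e^{-x_2 u_2} ⋯ ∫_{u_{n-1}+s x_{n-1}}^∞
x_n e^{-x_n u_n} du_n ⋯ du_1` equals
`∏_{i=1}^{n-1} (x_i / Σ_{j=i}^n x_j) · e^{-s x_i Σ_{j=i+1}^n x_j}` (here indexed from `0`). -/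
theorem nested_exponential_integral (n : ℕ) (hn : 2 ≤ n) (x : ℕ → ℝ)
    (hx : ∀ i, i < n → 0 < x i) (s : ℝ) (hs : 0 ≤ s) :
    nestedInt s x 0 n 0 =
      ∏ i ∈ Finset.range (n - 1),
        (x i / ∑ j ∈ Finset.Ico i n, x j) *
          Real.exp (-(s * x i * ∑ j ∈ Finset.Ico (i + 1) n, x j)) := by
  have := nestedInt_closed_form s x n 0 0 (fun j _ h2 => hx j (by omega))
  rw [this, Finset.range_eq_Ico]
  norm_num
end

section
/- For n ≥ 1 and any strictly positive real numbers x_1, …, x_n, the sum over all permutations τ of {1, …, n} of the products ∏_{i=1}^{n-1} x_{τ(i)} / ( Σ_{j=i}^{n} x_{τ(j)} ) equals 1. -/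
lemma fin_Ici_succ_map (n : ℕ) (i : Fin n) :
    Finset.Ici i.succ = (Finset.Ici i).map (Fin.succEmb n) := by
  ext j
  simp only [Finset.mem_Ici, Finset.mem_map, Fin.coe_succEmb]
  constructor
  · intro h
    refine ⟨j.pred (fun hj => by simp [hj, Fin.le_def] at h), ?_, Fin.succ_pred _ _⟩
    rw [← Fin.succ_le_succ_iff, Fin.succ_pred]
    exact h
  · rintro ⟨k, hk, rfl⟩
    exact Fin.succ_le_succ_iff.mpr hk

lemma aux_full : ∀ (n : ℕ) (x : Fin n → ℝ), (∀ i, 0 < x i) →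
    ∑ τ : Equiv.Perm (Fin n), ∏ i : Fin n, x (τ i) / ∑ j ∈ Finset.Ici i, x (τ j) = 1 := by
  intro n
  induction n with
  | zero =>
    intro x hx
    simp
  | succ n ih =>
    intro x hx
    have hS : 0 < ∑ j, x j := Finset.sum_pos (fun j _ => hx j) ⟨0, Finset.mem_univ 0⟩
    rw [← Equiv.sum_comp (Equiv.Perm.decomposeFin).symm, Fintype.sum_prod_type]
    have key : ∀ p : Fin (n + 1), ∀ e : Equiv.Perm (Fin n),
        (∏ i : Fin (n+1), x ((Equiv.Perm.decomposeFin.symm (p, e)) i) /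
          ∑ j ∈ Finset.Ici i, x ((Equiv.Perm.decomposeFin.symm (p, e)) j)) =
        x p / (∑ j, x j) *
          ∏ i : Fin n, (fun k => x (Equiv.swap 0 p k.succ)) (e i) /
            ∑ j ∈ Finset.Ici i, (fun k => x (Equiv.swap 0 p k.succ)) (e j) := by
      intro p e
      set τ := Equiv.Perm.decomposeFin.symm (p, e) with hτ
      rw [Fin.prod_univ_succ]
      congr 1
      · have h0 : (Finset.Ici (0 : Fin (n+1))) = Finset.univ := by
          ext j; simp [Fin.zero_le]
        rw [h0, Equiv.sum_comp τ x]
        congr 1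
        simp [hτ]
      · apply Finset.prod_congr rfl
        intro i _
        have hsucc : ∀ k : Fin n, τ k.succ = Equiv.swap 0 p (e k).succ := by
          intro k; simp [hτ, Equiv.Perm.decomposeFin_symm_apply_succ]
        rw [hsucc i, fin_Ici_succ_map, Finset.sum_map]
        simp only [Fin.coe_succEmb]
        congr 1
        apply Finset.sum_congr rfl
        intro j _
        rw [hsucc j]
    calc ∑ p : Fin (n+1), ∑ e : Equiv.Perm (Fin n),
          ∏ i : Fin (n+1), x ((Equiv.Perm.decomposeFin.symm (p, e)) i) /
            ∑ j ∈ Finset.Ici i, x ((Equiv.Perm.decomposeFin.symm (p, e)) j)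
        = ∑ p : Fin (n+1), x p / (∑ j, x j) := by
          apply Finset.sum_congr rfl
          intro p _
          rw [Finset.sum_congr rfl (fun e _ => key p e), ← Finset.mul_sum]
          have := ih (fun k => x (Equiv.swap 0 p k.succ)) (fun k => hx _)
          rw [this, mul_one]
      _ = 1 := by rw [← Finset.sum_div, div_self hS.ne']

/-- for `n ≥ 1` and strictly positive reals `x_1, …, x_n`, the sum over all
permutations `τ` of `{1, …, n}` of `∏_{i=1}^{n-1} x_{τ(i)} / (Σ_{j=i}^n x_{τ(j)})` equals `1`
(the product over the empty range, for `n = 1`, being `1`). Indices are 0-based here, so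
`i` ranges over `0, …, n-2` and the inner sum over `j ≥ i`. -/
theorem sum_sizeBiased_products_eq_one (n : ℕ) (hn : 1 ≤ n) (x : Fin n → ℝ)
    (hx : ∀ i, 0 < x i) :
    ∑ τ : Equiv.Perm (Fin n),
      ∏ i ∈ Finset.univ.filter (fun i : Fin n => (i : ℕ) < n - 1),
        x (τ i) / ∑ j ∈ Finset.Ici i, x (τ j) = 1 := by
  obtain ⟨m, rfl⟩ : ∃ m, n = m + 1 := ⟨n - 1, (Nat.succ_pred_eq_of_pos hn).symm⟩
  have hfilter : Finset.univ.filter (fun i : Fin (m+1) => (i : ℕ) < (m+1) - 1) =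
      Finset.univ.erase (Fin.last m) := by
    ext i
    simp [Fin.ext_iff, Nat.lt_iff_le_and_ne, Fin.le_last, Fin.le_def, Nat.lt_succ_iff,
      Fin.is_le i]
  rw [hfilter]
  have : ∀ τ : Equiv.Perm (Fin (m+1)),
      (∏ i ∈ Finset.univ.erase (Fin.last m),
        x (τ i) / ∑ j ∈ Finset.Ici i, x (τ j)) =
      ∏ i : Fin (m+1), x (τ i) / ∑ j ∈ Finset.Ici i, x (τ j) := by
    intro τ
    rw [← Finset.mul_prod_erase Finset.univ _ (Finset.mem_univ (Fin.last m))]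
    have hIci : Finset.Ici (Fin.last m) = {Fin.last m} := by
      ext j
      simp only [Finset.mem_Ici, Finset.mem_singleton]
      exact ⟨fun h => le_antisymm (Fin.le_last j) h, fun h => h ▸ le_rfl⟩
    rw [hIci, Finset.sum_singleton, div_self (hx (τ (Fin.last m))).ne', one_mul]
  rw [Finset.sum_congr rfl (fun τ _ => this τ)]
  exact aux_full (m+1) x hx
end

section
/- For n ≥ 2 and every s ≥ 0, the probability of the union over all permutations τ of {1, …, n} of the events E_τ(s) equals e^{- s · Σ_{1 ≤ i < j ≤ n} x_i x_j }. (The events E_τ(s), τ ranging over permutations, are pairwise disjoint when s > 0.) Consequently the first coalescence time S, defined by { S > s } = ⋃_τ E_τ(s), is exponentially distributed with rate Σ_{1 ≤ i < j ≤ n} x_i x_j. -/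
open MeasureTheory ProbabilityTheory Real

/-- The event `E_τ(s)`: for every consecutive pair of positions `j, j+1` (0-indexed),
`ξ_{τ(j+1)} > ξ_{τ(j)} + s · x_{τ(j)}`. -/
def gapEvent {Ω : Type*} (n : ℕ) (x : Fin n → ℝ) (ξ : Fin n → Ω → ℝ) (s : ℝ)
    (τ : Equiv.Perm (Fin n)) : Set Ω :=
  {ω | ∀ j : ℕ, ∀ hj : j + 1 < n,
    ξ (τ ⟨j + 1, hj⟩) ω > ξ (τ ⟨j, Nat.lt_of_succ_lt hj⟩) ω
      + s * x (τ ⟨j, Nat.lt_of_succ_lt hj⟩)}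

/-- `Σ_{1 ≤ i < j ≤ n} x_i x_j`. -/
def pairSum (n : ℕ) (x : Fin n → ℝ) : ℝ :=
  ∑ i : Fin n, ∑ j ∈ Finset.Ioi i, x i * x j

/-! ### Auxiliary combinatorial lemmas -/

section Combinatorics

variable {n : ℕ}

lemma sum_Iio_eq_filter (F : Fin n → Fin n → ℝ) :
    ∑ p : Fin n, ∑ k ∈ Finset.Iio p, F k p
      = ∑ q ∈ Finset.univ.filter (fun q : Fin n × Fin n => q.1 < q.2), F q.1 q.2 := by
  have h1 : ∀ p : Fin n, ∑ k ∈ Finset.Iio p, F k p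
      = ∑ k : Fin n, if k < p then F k p else 0 := by
    intro p
    rw [← Finset.sum_filter]
    congr 1
    ext k
    simp
  calc ∑ p : Fin n, ∑ k ∈ Finset.Iio p, F k p
      = ∑ p : Fin n, ∑ k : Fin n, if k < p then F k p else 0 :=
        Finset.sum_congr rfl fun p _ => h1 p
    _ = ∑ k : Fin n, ∑ p : Fin n, if k < p then F k p else 0 := Finset.sum_comm
    _ = ∑ q ∈ (Finset.univ ×ˢ Finset.univ).filter (fun q : Fin n × Fin n => q.1 < q.2),
          F q.1 q.2 := by
        rw [Finset.sum_filter, Finset.sum_product]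
    _ = _ := by rw [Finset.univ_product_univ]

lemma sum_Ioi_eq_filter (F : Fin n → Fin n → ℝ) :
    ∑ i : Fin n, ∑ j ∈ Finset.Ioi i, F i j
      = ∑ q ∈ Finset.univ.filter (fun q : Fin n × Fin n => q.1 < q.2), F q.1 q.2 := by
  have h1 : ∀ i : Fin n, ∑ j ∈ Finset.Ioi i, F i j
      = ∑ j : Fin n, if i < j then F i j else 0 := by
    intro i
    rw [← Finset.sum_filter]
    congr 1
    ext j
    simp
  calc ∑ i : Fin n, ∑ j ∈ Finset.Ioi i, F i j
      = ∑ i : Fin n, ∑ j : Fin n, if i < j then F i j else 0 :=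
        Finset.sum_congr rfl fun i _ => h1 i
    _ = ∑ q ∈ (Finset.univ ×ˢ Finset.univ).filter (fun q : Fin n × Fin n => q.1 < q.2),
          F q.1 q.2 := by
        rw [Finset.sum_filter, Finset.sum_product]
    _ = _ := by rw [Finset.univ_product_univ]

lemma sum_filter_ne_eq (h : Fin n × Fin n → ℝ) (hsym : ∀ q : Fin n × Fin n, h (q.2, q.1) = h q) :
    ∑ q ∈ Finset.univ.filter (fun q : Fin n × Fin n => q.1 ≠ q.2), h q
      = 2 * ∑ q ∈ Finset.univ.filter (fun q : Fin n × Fin n => q.1 < q.2), h q := by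
  have hd : Disjoint (Finset.univ.filter (fun q : Fin n × Fin n => q.1 < q.2))
      (Finset.univ.filter (fun q : Fin n × Fin n => q.2 < q.1)) := by
    rw [Finset.disjoint_left]
    intro q h1 h2
    simp only [Finset.mem_filter] at h1 h2
    exact absurd h2.2 (lt_asymm h1.2)
  have hu : Finset.univ.filter (fun q : Fin n × Fin n => q.1 ≠ q.2)
      = Finset.univ.filter (fun q : Fin n × Fin n => q.1 < q.2)
        ∪ Finset.univ.filter (fun q : Fin n × Fin n => q.2 < q.1) := by
    ext q
    simp only [Finset.mem_filter, Finset.mem_union, Finset.mem_univ, true_and]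
    exact ne_iff_lt_or_gt
  rw [hu, Finset.sum_union hd, two_mul]
  congr 1
  refine Finset.sum_equiv (Equiv.prodComm (Fin n) (Fin n)) (fun q => ?_) (fun q hq => ?_)
  · simp only [Finset.mem_filter, Finset.mem_univ, true_and, Equiv.prodComm_apply, Prod.fst_swap,
      Prod.snd_swap]
  · exact (hsym q).symm

lemma sum_filter_ne_perm (x : Fin n → ℝ) (e : Equiv.Perm (Fin n)) :
    ∑ q ∈ Finset.univ.filter (fun q : Fin n × Fin n => q.1 ≠ q.2), x (e q.1) * x (e q.2)
      = ∑ q ∈ Finset.univ.filter (fun q : Fin n × Fin n => q.1 ≠ q.2), x q.1 * x q.2 := by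
  refine Finset.sum_equiv (Equiv.prodCongr e e) (fun q => ?_) (fun q hq => rfl)
  simp [Equiv.prodCongr]

lemma key_sum (x : Fin n → ℝ) (e : Equiv.Perm (Fin n)) :
    ∑ p : Fin n, ∑ k ∈ Finset.Iio p, x (e k) * x (e p) = pairSum n x := by
  have h1 := sum_Iio_eq_filter (fun k p => x (e k) * x (e p))
  have h2 := sum_Ioi_eq_filter (fun i j => x i * x j)
  have h3 := sum_filter_ne_eq (fun q : Fin n × Fin n => x (e q.1) * x (e q.2))
    (fun q => mul_comm _ _)
  have h4 := sum_filter_ne_eq (fun q : Fin n × Fin n => x q.1 * x q.2) (fun q => mul_comm _ _)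
  have h5 := sum_filter_ne_perm x e
  rw [pairSum, h2, h1]
  linarith

end Combinatorics

/-! ### The event as a set in the product space, and its order-theoretic properties -/

section GapSet

variable {n : ℕ}

/-- Set version of `gapEvent` in the product space `Fin n → ℝ`. -/
def gapSet (n : ℕ) (x : Fin n → ℝ) (s : ℝ) (τ : Equiv.Perm (Fin n)) : Set (Fin n → ℝ) :=
  {u | ∀ j : ℕ, ∀ hj : j + 1 < n,
    u (τ ⟨j + 1, hj⟩) > u (τ ⟨j, Nat.lt_of_succ_lt hj⟩) + s * x (τ ⟨j, Nat.lt_of_succ_lt hj⟩)}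

lemma gapEvent_eq {Ω : Type*} (x : Fin n → ℝ) (ξ : Fin n → Ω → ℝ) (s : ℝ)
    (τ : Equiv.Perm (Fin n)) :
    gapEvent n x ξ s τ = (fun ω i => ξ i ω) ⁻¹' gapSet n x s τ := rfl

lemma gapSet_measurable (x : Fin n → ℝ) (s : ℝ) (τ : Equiv.Perm (Fin n)) :
    MeasurableSet (gapSet n x s τ) := by
  have h : gapSet n x s τ = ⋂ (j : ℕ) (hj : j + 1 < n),
      {u : Fin n → ℝ | u (τ ⟨j, Nat.lt_of_succ_lt hj⟩)
        + s * x (τ ⟨j, Nat.lt_of_succ_lt hj⟩) < u (τ ⟨j + 1, hj⟩)} := by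
    ext u
    simp only [gapSet, gt_iff_lt, Set.mem_setOf_eq, Set.mem_iInter]
  rw [h]
  exact MeasurableSet.iInter fun j => MeasurableSet.iInter fun hj =>
    measurableSet_lt ((measurable_pi_apply _).add_const _) (measurable_pi_apply _)

lemma gapSet_strictMono {m : ℕ} {x : Fin (m + 1) → ℝ} (hx : ∀ i, 0 < x i) {s : ℝ} (hs : 0 ≤ s)
    {τ : Equiv.Perm (Fin (m + 1))} {u : Fin (m + 1) → ℝ} (hu : u ∈ gapSet (m + 1) x s τ) :
    StrictMono (fun p => u (τ p)) := by
  rw [Fin.strictMono_iff_lt_succ]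
  intro i
  have hj : (i : ℕ) + 1 < m + 1 := by omega
  have h := hu i hj
  have h1 : (⟨(i : ℕ) + 1, hj⟩ : Fin (m + 1)) = i.succ := by
    apply Fin.ext; simp
  have h2 : (⟨(i : ℕ), Nat.lt_of_succ_lt hj⟩ : Fin (m + 1)) = i.castSucc := by
    apply Fin.ext; simp
  rw [h1, h2] at h
  have := mul_nonneg hs (hx (τ i.castSucc)).le
  show u (τ i.castSucc) < u (τ i.succ)
  linarith

lemma gapSet_disjoint {m : ℕ} {x : Fin (m + 1) → ℝ} (hx : ∀ i, 0 < x i) {s : ℝ} (hs : 0 ≤ s) :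
    Pairwise (Function.onFun Disjoint (gapSet (m + 1) x s)) := by
  intro τ σ hne
  rw [Function.onFun, Set.disjoint_left]
  intro u huτ huσ
  apply hne
  have h1 := gapSet_strictMono hx hs huτ
  have h2 := gapSet_strictMono hx hs huσ
  have hr : Set.range (fun p => u (τ p)) = Set.range (fun p => u (σ p)) := by
    have e1 : Set.range (fun p => u (τ p)) = Set.range u := τ.surjective.range_comp u
    have e2 : Set.range (fun p => u (σ p)) = Set.range u := σ.surjective.range_comp u
    rw [e1, e2]
  haveI : WellFoundedLT (Fin (m + 1)) := inferInstance
  have heq := (StrictMono.range_inj h1 h2).mp hr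
  have huinj : Function.Injective u := by
    have hcomp : Function.Injective (fun p => u (τ p)) := h1.injective
    intro a b hab
    have h3 : (fun p => u (τ p)) (τ.symm a) = (fun p => u (τ p)) (τ.symm b) := by
      simp only [Equiv.apply_symm_apply]
      exact hab
    exact τ.symm.injective (hcomp h3)
  exact Equiv.ext fun p => huinj (congrFun heq p)

lemma exists_gapSet {m : ℕ} (x : Fin (m + 1) → ℝ) {u : Fin (m + 1) → ℝ}
    (hu : Function.Injective u) : ∃ τ, u ∈ gapSet (m + 1) x 0 τ := by
  refine ⟨Tuple.sort u, fun j hj => ?_⟩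
  have hmono : Monotone (u ∘ Tuple.sort u) := Tuple.monotone_sort u
  have hsm : StrictMono (u ∘ Tuple.sort u) :=
    hmono.strictMono_of_injective (hu.comp (Tuple.sort u).injective)
  have hlt : (⟨j, Nat.lt_of_succ_lt hj⟩ : Fin (m + 1)) < ⟨j + 1, hj⟩ := by
    simp [Fin.lt_def]
  have := hsm hlt
  simpa using this

end GapSet

/-! ### Measure-theoretic auxiliary lemmas -/

section MeasureAux

variable {n : ℕ}

lemma expMeasure_withDensity (r : ℝ) : expMeasure r = volume.withDensity (exponentialPDF r) := rfl

lemma expMeasure_Iio_zero (r : ℝ) : expMeasure r (Set.Iio 0) = 0 := by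
  rw [expMeasure_withDensity, withDensity_apply _ measurableSet_Iio]
  exact lintegral_exponentialPDF_of_nonpos le_rfl

instance expMeasure_noAtoms (r : ℝ) : NullSingletonClass (expMeasure r) := by
  constructor
  intro a
  rw [expMeasure_withDensity, withDensity_apply _ (measurableSet_singleton a)]
  exact setLIntegral_measure_zero _ _ (measure_singleton a)

lemma measurable_exponentialPDF (r : ℝ) : Measurable (exponentialPDF r) :=
  (measurable_exponentialPDFReal r).ennreal_ofReal

/-- Shifting the exponential measure to the right multiplies it by `e^{-rc}` on `[0, ∞)`. -/
lemma expMeasure_shift {r c : ℝ} (hr : 0 < r) (hc : 0 ≤ c) {B : Set ℝ}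
    (hB : MeasurableSet B) (hB0 : B ⊆ Set.Ici 0) :
    expMeasure r ((fun u => u - c) ⁻¹' B) =
      ENNReal.ofReal (Real.exp (-(r * c))) * expMeasure r B := by
  have hBm : MeasurableSet ((fun u : ℝ => u - c) ⁻¹' B) :=
    hB.preimage (measurable_id.sub_const c)
  rw [expMeasure_withDensity, withDensity_apply _ hBm, withDensity_apply _ hB,
    ← lintegral_indicator hBm, ← lintegral_indicator hB,
    ← lintegral_add_right_eq_self
      (fun u => Set.indicator ((fun v : ℝ => v - c) ⁻¹' B) (exponentialPDF r) u) c]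
  have key : ∀ u : ℝ, Set.indicator ((fun v : ℝ => v - c) ⁻¹' B) (exponentialPDF r) (u + c)
      = ENNReal.ofReal (Real.exp (-(r * c))) * Set.indicator B (exponentialPDF r) u := by
    intro u
    by_cases hu : u ∈ B
    · have hmem : u + c ∈ (fun v : ℝ => v - c) ⁻¹' B := by
        simp only [Set.mem_preimage, add_sub_cancel_right]
        exact hu
      rw [Set.indicator_of_mem hmem, Set.indicator_of_mem hu]
      have hu0 : (0 : ℝ) ≤ u := hB0 hu
      rw [exponentialPDF_of_nonneg (by linarith : (0:ℝ) ≤ u + c),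
        exponentialPDF_of_nonneg hu0, ← ENNReal.ofReal_mul (Real.exp_pos _).le]
      rw [mul_comm (rexp (-(r * c))), mul_assoc, ← Real.exp_add]
      ring_nf
    · have hmem : u + c ∉ (fun v : ℝ => v - c) ⁻¹' B := by
        simp only [Set.mem_preimage, add_sub_cancel_right]
        exact hu
      rw [Set.indicator_of_notMem hmem, Set.indicator_of_notMem hu, mul_zero]
  simp_rw [key]
  rw [lintegral_const_mul _ ((measurable_exponentialPDF r).indicator hB)]

lemma pi_restrict_eq (μs : Fin n → Measure ℝ) [∀ i, IsProbabilityMeasure (μs i)]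
    (t : Fin n → Set ℝ) (ht : ∀ i, MeasurableSet (t i)) :
    Measure.pi (fun i => (μs i).restrict (t i))
      = (Measure.pi μs).restrict (Set.pi Set.univ t) := by
  haveI : ∀ i, IsFiniteMeasure ((μs i).restrict (t i)) := fun i =>
    ⟨by
      rw [Measure.restrict_apply MeasurableSet.univ]
      exact lt_of_le_of_lt (measure_mono Set.inter_subset_right) (measure_lt_top _ _)⟩
  refine Measure.pi_eq fun s hs => ?_
  rw [Measure.restrict_apply (MeasurableSet.univ_pi hs), ← Set.pi_inter_distrib, Measure.pi_pi]
  exact Finset.prod_congr rfl fun i _ => (Measure.restrict_apply (hs i)).symm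

lemma pi_smul_eq (e : Fin n → ENNReal) (he : ∀ i, e i ≠ ⊤) (μs : Fin n → Measure ℝ)
    [∀ i, IsProbabilityMeasure (μs i)] (t : Fin n → Set ℝ) (ht : ∀ i, MeasurableSet (t i)) :
    Measure.pi (fun i => e i • (μs i).restrict (t i))
      = (∏ i, e i) • Measure.pi (fun i => (μs i).restrict (t i)) := by
  haveI h1 : ∀ i, IsFiniteMeasure ((μs i).restrict (t i)) := fun i =>
    ⟨by
      rw [Measure.restrict_apply MeasurableSet.univ]
      exact lt_of_le_of_lt (measure_mono Set.inter_subset_right) (measure_lt_top _ _)⟩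
  haveI h2 : ∀ i, IsFiniteMeasure (e i • (μs i).restrict (t i)) := fun i =>
    ⟨by
      rw [Measure.smul_apply, smul_eq_mul]
      exact ENNReal.mul_lt_top (he i).lt_top (measure_lt_top _ _)⟩
  haveI s1 : ∀ i, SigmaFinite ((μs i).restrict (t i)) := fun i =>
    @IsFiniteMeasure.toSigmaFinite _ _ _ (h1 i)
  haveI s2 : ∀ i, SigmaFinite (e i • (μs i).restrict (t i)) := fun i =>
    @IsFiniteMeasure.toSigmaFinite _ _ _ (h2 i)
  refine Measure.pi_eq fun s hs => ?_
  haveI s1' : ∀ i, SigmaFinite ((fun i => (μs i).restrict (t i)) i) := s1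
  have hpp := Measure.pi_pi (fun i => (μs i).restrict (t i)) s
  rw [Measure.smul_apply, smul_eq_mul, hpp, ← Finset.prod_mul_distrib]
  exact Finset.prod_congr rfl fun i _ => rfl

lemma map_joint_eq_pi {Ω : Type*} [MeasurableSpace Ω] (P : Measure Ω) [IsProbabilityMeasure P]
    (ξ : Fin n → Ω → ℝ) (hmeas : ∀ i, Measurable (ξ i))
    (hindep : iIndepFun ξ P) :
    P.map (fun ω i => ξ i ω) = Measure.pi (fun i => P.map (ξ i)) := by
  haveI : ∀ i, IsProbabilityMeasure (P.map (ξ i)) := fun i =>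
    Measure.isProbabilityMeasure_map (hmeas i).aemeasurable
  refine (Measure.pi_eq fun s hs => ?_).symm
  rw [Measure.map_apply (measurable_pi_lambda _ hmeas) (MeasurableSet.univ_pi hs)]
  have h : (fun ω i => ξ i ω) ⁻¹' Set.pi Set.univ s = ⋂ i ∈ Finset.univ, ξ i ⁻¹' s i := by
    ext ω
    simp [Set.mem_univ_pi]
  rw [h, hindep.measure_inter_preimage_eq_mul Finset.univ (fun i _ => hs i)]
  exact Finset.prod_congr rfl fun i _ => (Measure.map_apply (hmeas i) (hs i)).symm

lemma pi_diag_null (μs : Fin n → Measure ℝ) [∀ i, IsProbabilityMeasure (μs i)]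
    [∀ i, NullSingletonClass (μs i)] {i j : Fin n} (hij : i ≠ j) :
    Measure.pi μs {u : Fin n → ℝ | u i = u j} = 0 := by
  classical
  set p : Fin n → Prop := fun k => k = i with hp
  have hmp := MeasureTheory.measurePreserving_piEquivPiSubtypeProd
    (α := fun _ : Fin n => ℝ) μs p
  set e := MeasurableEquiv.piEquivPiSubtypeProd (fun _ : Fin n => ℝ) p with he
  have hji : ¬ p j := fun h => hij (by rw [h])
  set T : Set ((∀ k : Subtype p, ℝ) × (∀ k : {k // ¬ p k}, ℝ)) :=
    {q | q.2 ⟨j, hji⟩ = q.1 ⟨i, rfl⟩} with hT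
  have hTm : MeasurableSet T := by
    apply measurableSet_eq_fun
    · exact (measurable_pi_apply _).comp measurable_snd
    · exact (measurable_pi_apply _).comp measurable_fst
  have hpre : {u : Fin n → ℝ | u i = u j} = e ⁻¹' T := by
    ext u
    simp only [Set.mem_setOf_eq, Set.mem_preimage, hT, he,
      MeasurableEquiv.piEquivPiSubtypeProd, Equiv.piEquivPiSubtypeProd]
    exact eq_comm
  rw [hpre, hmp.measure_preimage hTm.nullMeasurableSet, Measure.prod_apply hTm]
  have hz : ∀ a : (∀ k : Subtype p, ℝ),
      (Measure.pi fun k : {k // ¬ p k} => μs k) (Prod.mk a ⁻¹' T) = 0 := by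
    intro a
    have : Prod.mk a ⁻¹' T = {b : ∀ k : {k // ¬ p k}, ℝ | b ⟨j, hji⟩ = a ⟨i, rfl⟩} := rfl
    rw [this]
    exact Measure.pi_hyperplane (fun k : {k // ¬ p k} => μs (k : Fin n)) ⟨j, hji⟩ (a ⟨i, rfl⟩)
  simp only [hz, lintegral_zero]

end MeasureAux

/-- for `n ≥ 2` and every `s ≥ 0`,
`P(⋃_τ E_τ(s)) = e^{-s Σ_{1≤i<j≤n} x_i x_j}`, and the events `E_τ(s)` are pairwise
disjoint when `s > 0`. Hence the first coalescence time `S` (whose tail events are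
`{S > s} = ⋃_τ E_τ(s)`) is exponential with rate `Σ_{1≤i<j≤n} x_i x_j`. -/
theorem prob_union_gapEvents (n : ℕ) (hn : 2 ≤ n) (x : Fin n → ℝ) (hx : ∀ i, 0 < x i)
    {Ω : Type*} [MeasurableSpace Ω] (P : Measure Ω) [IsProbabilityMeasure P]
    (ξ : Fin n → Ω → ℝ) (hmeas : ∀ i, Measurable (ξ i))
    (hindep : iIndepFun ξ P)
    (hdist : ∀ i, P.map (ξ i) = expMeasure (x i))
    (s : ℝ) (hs : 0 ≤ s) :
    P (⋃ τ : Equiv.Perm (Fin n), gapEvent n x ξ s τ) =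
        ENNReal.ofReal (Real.exp (-(s * pairSum n x))) ∧
      (0 < s → Pairwise (Function.onFun Disjoint (gapEvent n x ξ s))) := by
  classical
  obtain ⟨m, rfl⟩ : ∃ m, n = m + 1 := ⟨n - 1, by omega⟩
  haveI hprobExp : ∀ i, IsProbabilityMeasure (expMeasure (x i)) := fun i =>
    isProbabilityMeasure_expMeasure (hx i)
  -- disjointness
  have hdisj : Pairwise (Function.onFun Disjoint (gapEvent (m + 1) x ξ s)) := by
    intro τ σ h
    have := gapSet_disjoint hx hs h
    rw [Function.onFun, gapEvent_eq, gapEvent_eq]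
    exact Disjoint.preimage _ this
  refine ⟨?_, fun _ => hdisj⟩
  set μpi : Measure (Fin (m + 1) → ℝ) := Measure.pi (fun i => expMeasure (x i)) with hμpi
  haveI : IsProbabilityMeasure μpi := by
    rw [hμpi]; infer_instance
  have hJmeas : Measurable (fun ω i => ξ i ω) := measurable_pi_lambda _ hmeas
  have hmeasE : ∀ τ : Equiv.Perm (Fin (m + 1)), MeasurableSet (gapEvent (m + 1) x ξ s τ) := by
    intro τ
    rw [gapEvent_eq]
    exact hJmeas (gapSet_measurable x s τ)
  -- The per-permutation probability
  have hper : ∀ τ : Equiv.Perm (Fin (m + 1)), P (gapEvent (m + 1) x ξ s τ)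
      = ENNReal.ofReal (Real.exp (-(s * pairSum (m + 1) x))) * μpi (gapSet (m + 1) x 0 τ) := by
    intro τ
    set c : Fin (m + 1) → ℝ := fun i => s * ∑ k ∈ Finset.Iio (τ.symm i), x (τ k) with hc
    have hcτ : ∀ p, c (τ p) = s * ∑ k ∈ Finset.Iio p, x (τ k) := by
      intro p
      simp only [hc, Equiv.symm_apply_apply]
    have hc0 : ∀ i, 0 ≤ c i := fun i =>
      mul_nonneg hs (Finset.sum_nonneg fun k _ => (hx _).le)
    have hgap : ∀ (j : ℕ) (hj : j + 1 < m + 1),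
        c (τ ⟨j + 1, hj⟩)
          = c (τ ⟨j, Nat.lt_of_succ_lt hj⟩) + s * x (τ ⟨j, Nat.lt_of_succ_lt hj⟩) := by
      intro j hj
      rw [hcτ, hcτ]
      have hins : Finset.Iio (⟨j + 1, hj⟩ : Fin (m + 1))
          = insert (⟨j, Nat.lt_of_succ_lt hj⟩ : Fin (m + 1))
              (Finset.Iio (⟨j, Nat.lt_of_succ_lt hj⟩ : Fin (m + 1))) := by
        ext k
        simp only [Finset.mem_Iio, Finset.mem_insert, Fin.lt_def, Fin.ext_iff]
        omega
      rw [hins, Finset.sum_insert (by simp)]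
      ring
    -- the shifted random variables
    have hsubmeas : ∀ i, Measurable (fun u : ℝ => u - c i) := fun i =>
      measurable_id.sub_const (c i)
    have hηmeas : ∀ i, Measurable (fun ω => ξ i ω - c i) := fun i => (hmeas i).sub_const _
    have hηindep : iIndepFun (fun i ω => ξ i ω - c i) P :=
      hindep.comp (fun i u => u - c i) hsubmeas
    have hηdist : ∀ i, P.map (fun ω => ξ i ω - c i)
        = (expMeasure (x i)).map (fun u => u - c i) := by
      intro i
      have : (fun ω => ξ i ω - c i) = (fun u => u - c i) ∘ ξ i := rfl
      rw [this, ← Measure.map_map (hsubmeas i) (hmeas i), hdist i]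
    set νf : Fin (m + 1) → Measure ℝ := fun i => (expMeasure (x i)).map (fun u => u - c i)
      with hνf
    haveI hνprob : ∀ i, IsProbabilityMeasure (νf i) := fun i =>
      Measure.isProbabilityMeasure_map ((hsubmeas i).aemeasurable)
    -- the event expressed via the shifted variables
    have hevent : gapEvent (m + 1) x ξ s τ
        = (fun ω i => ξ i ω - c i) ⁻¹' gapSet (m + 1) x 0 τ := by
      ext ω
      simp only [gapEvent, gapSet, gt_iff_lt, Set.mem_setOf_eq, Set.mem_preimage]
      constructor
      · intro h j hj
        have h1 := h j hj
        have h2 := hgap j hj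
        rw [zero_mul]
        linarith
      · intro h j hj
        have h1 := h j hj
        rw [zero_mul] at h1
        have h2 := hgap j hj
        linarith
    have hPE : P (gapEvent (m + 1) x ξ s τ) = Measure.pi νf (gapSet (m + 1) x 0 τ) := by
      rw [hevent,
        ← Measure.map_apply (measurable_pi_lambda _ hηmeas) (gapSet_measurable x 0 τ),
        map_joint_eq_pi P (fun i ω => ξ i ω - c i) hηmeas hηindep]
      have hfn : (fun i => Measure.map (fun ω => ξ i ω - c i) P) = νf := funext hηdist
      rw [hfn]
    set A : Set (Fin (m + 1) → ℝ) := gapSet (m + 1) x 0 τ with hA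
    have hAmeas : MeasurableSet A := gapSet_measurable x 0 τ
    set Q : Set (Fin (m + 1) → ℝ) := Set.pi Set.univ (fun _ => Set.Ici (0 : ℝ)) with hQ
    -- per-coordinate restriction identity
    have hres : ∀ i, (νf i).restrict (Set.Ici 0)
        = ENNReal.ofReal (Real.exp (-(x i * c i))) • (expMeasure (x i)).restrict (Set.Ici 0) := by
      intro i
      refine Measure.ext fun B hB => ?_
      rw [Measure.restrict_apply hB, Measure.smul_apply, Measure.restrict_apply hB, smul_eq_mul,
        hνf]
      rw [Measure.map_apply (hsubmeas i) (hB.inter measurableSet_Ici)]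
      exact expMeasure_shift (hx i) (hc0 i) (hB.inter measurableSet_Ici) Set.inter_subset_right
    -- the first coordinate is not shifted
    have hc0τ : c (τ 0) = 0 := by
      rw [hcτ]
      have h0 : Finset.Iio (0 : Fin (m + 1)) = ∅ := by
        ext k
        simp [Fin.lt_def]
      rw [h0, Finset.sum_empty, mul_zero]
    have hν0 : νf (τ 0) = expMeasure (x (τ 0)) := by
      rw [hνf]
      simp only [hc0τ, sub_zero]
      exact Measure.map_id
    -- null sets and trimming to the positive orthant
    have hkey : ∀ ρ : Measure (Fin (m + 1) → ℝ), ρ {u : Fin (m + 1) → ℝ | u (τ 0) < 0} = 0 →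
        ρ A = ρ (A ∩ Q) := by
      intro ρ hρ
      refine le_antisymm ?_ (measure_mono Set.inter_subset_left)
      have hsub : A \ Q ⊆ {u : Fin (m + 1) → ℝ | u (τ 0) < 0} := by
        intro u hu
        by_contra hcon
        simp only [Set.mem_setOf_eq, not_lt] at hcon
        refine hu.2 ?_
        intro i _
        have hmono := (gapSet_strictMono hx le_rfl hu.1).monotone
        have h0le : u (τ 0) ≤ u (τ (τ.symm i)) := hmono (Fin.zero_le _)
        have heqi : u (τ (τ.symm i)) = u i := by rw [Equiv.apply_symm_apply]
        simp only [Set.mem_Ici]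
        rw [← heqi]
        linarith [hcon]
      calc ρ A = ρ ((A ∩ Q) ∪ (A \ Q)) := by rw [Set.inter_union_diff]
        _ ≤ ρ (A ∩ Q) + ρ (A \ Q) := measure_union_le _ _
        _ = ρ (A ∩ Q) := by rw [measure_mono_null hsub hρ, add_zero]
    have hEν : Measure.pi νf {u : Fin (m + 1) → ℝ | u (τ 0) < 0} = 0 := by
      have hset : {u : Fin (m + 1) → ℝ | u (τ 0) < 0}
          = Function.eval (τ 0) ⁻¹' Set.Iio 0 := rfl
      rw [hset]
      refine Measure.pi_eval_preimage_null νf ?_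
      rw [hν0]
      exact expMeasure_Iio_zero _
    have hEμ : μpi {u : Fin (m + 1) → ℝ | u (τ 0) < 0} = 0 := by
      have hset : {u : Fin (m + 1) → ℝ | u (τ 0) < 0}
          = Function.eval (τ 0) ⁻¹' Set.Iio 0 := rfl
      rw [hμpi, hset]
      exact Measure.pi_eval_preimage_null (fun i => expMeasure (x i)) (expMeasure_Iio_zero _)
    -- the product of the exponential factors
    have hsum : ∑ i, x i * c i = s * pairSum (m + 1) x := by
      rw [← Equiv.sum_comp τ (fun i => x i * c i)]
      have hterm : ∀ p : Fin (m + 1),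
          x (τ p) * c (τ p) = s * ∑ k ∈ Finset.Iio p, x (τ k) * x (τ p) := by
        intro p
        rw [hcτ p]
        have hring : x (τ p) * (s * ∑ k ∈ Finset.Iio p, x (τ k))
            = s * ((∑ k ∈ Finset.Iio p, x (τ k)) * x (τ p)) := by ring
        rw [hring, Finset.sum_mul]
      rw [Finset.sum_congr rfl (fun p _ => hterm p), ← Finset.mul_sum, key_sum x τ]
    have hprodeq : (∏ i, ENNReal.ofReal (Real.exp (-(x i * c i))))
        = ENNReal.ofReal (Real.exp (-(s * pairSum (m + 1) x))) := by
      rw [← ENNReal.ofReal_prod_of_nonneg (fun i _ => (Real.exp_pos _).le)]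
      congr 1
      rw [← Real.exp_sum]
      congr 1
      rw [← hsum, ← Finset.sum_neg_distrib]
    -- put everything together
    calc P (gapEvent (m + 1) x ξ s τ) = Measure.pi νf A := hPE
      _ = Measure.pi νf (A ∩ Q) := hkey _ hEν
      _ = ((Measure.pi νf).restrict Q) A := (Measure.restrict_apply hAmeas).symm
      _ = (Measure.pi (fun i => (νf i).restrict (Set.Ici 0))) A := by
          rw [pi_restrict_eq νf (fun _ => Set.Ici 0) (fun _ => measurableSet_Ici)]
      _ = ((∏ i, ENNReal.ofReal (Real.exp (-(x i * c i))))
            • Measure.pi (fun i => (expMeasure (x i)).restrict (Set.Ici 0))) A := by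
          have hfun : (fun i => (νf i).restrict (Set.Ici 0))
              = fun i => ENNReal.ofReal (Real.exp (-(x i * c i)))
                  • (expMeasure (x i)).restrict (Set.Ici 0) := funext hres
          rw [hfun, pi_smul_eq _ (fun i => ENNReal.ofReal_ne_top) _ _
            (fun _ => measurableSet_Ici)]
      _ = (∏ i, ENNReal.ofReal (Real.exp (-(x i * c i)))) * ((μpi.restrict Q) A) := by
          rw [Measure.smul_apply, smul_eq_mul,
            pi_restrict_eq (fun i => expMeasure (x i)) (fun _ => Set.Ici 0)
              (fun _ => measurableSet_Ici)]
      _ = (∏ i, ENNReal.ofReal (Real.exp (-(x i * c i)))) * μpi (A ∩ Q) := by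
          rw [Measure.restrict_apply hAmeas]
      _ = (∏ i, ENNReal.ofReal (Real.exp (-(x i * c i)))) * μpi A := by
          rw [← hkey μpi hEμ]
      _ = ENNReal.ofReal (Real.exp (-(s * pairSum (m + 1) x))) * μpi A := by
          rw [hprodeq]
  -- sum over permutations
  rw [measure_iUnion hdisj hmeasE, tsum_congr hper, ENNReal.tsum_mul_left]
  have hsum1 : ∑' τ : Equiv.Perm (Fin (m + 1)), μpi (gapSet (m + 1) x 0 τ) = 1 := by
    rw [← measure_iUnion (gapSet_disjoint hx le_rfl) (fun τ => gapSet_measurable x 0 τ)]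
    refine le_antisymm prob_le_one ?_
    have hN : μpi {u : Fin (m + 1) → ℝ | ¬ Function.Injective u} = 0 := by
      have hsub : {u : Fin (m + 1) → ℝ | ¬ Function.Injective u}
          ⊆ ⋃ (i : Fin (m + 1)) (j : Fin (m + 1)) (_ : i ≠ j), {u | u i = u j} := by
        intro u hu
        simp only [Set.mem_setOf_eq, Function.Injective, not_forall] at hu
        obtain ⟨a, b, hab, hne⟩ := hu
        exact Set.mem_iUnion.2 ⟨a, Set.mem_iUnion.2 ⟨b, Set.mem_iUnion.2 ⟨hne, hab⟩⟩⟩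
      refine measure_mono_null hsub ?_
      rw [hμpi]
      exact measure_iUnion_null fun i => measure_iUnion_null fun j =>
        measure_iUnion_null fun hij => pi_diag_null _ hij
    calc (1 : ENNReal) = μpi (Set.univ \ {u : Fin (m + 1) → ℝ | ¬ Function.Injective u}) := by
          rw [measure_diff_null hN, measure_univ]
      _ ≤ μpi (⋃ τ, gapSet (m + 1) x 0 τ) := by
          refine measure_mono fun u hu => ?_
          have hinj : Function.Injective u := not_not.mp hu.2
          obtain ⟨τ, hτ⟩ := exists_gapSet x hinj
          exact Set.mem_iUnion.2 ⟨τ, hτ⟩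
  rw [hsum1, mul_one]
end

section
/- Let (c_j)_{j ≥ 1} be strictly positive reals with Σ_{j ≥ 1} c_j³ < ∞, and let (ξ_j)_{j ≥ 1} be independent random variables with ξ_j exponentially distributed with rate c_j. Then for every fixed s ≥ 0, the partial sums Σ_{j=1}^{N} ( c_j · 1{ ξ_j ≤ s } − c_j² · s ) converge almost surely (to a finite limit) as N → ∞. Hence the process V^c(s) = Σ_j ( c_j 1{ ξ_j ≤ s } − c_j² s ) is well defined for every s ≥ 0. -/
open MeasureTheory ProbabilityTheory Filter Topology

/-- if `c_j > 0` with `Σ_j c_j³ < ∞` and the `ξ_j` are independent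
exponentials with rates `c_j`, then for every fixed `s ≥ 0` the partial sums
`Σ_{j<N} (c_j · 1{ξ_j ≤ s} − c_j² s)` converge almost surely to a finite limit as
`N → ∞`; hence `V^c(s)` is well defined. -/
theorem Vc_partial_sums_converge_ae {Ω : Type*} [MeasurableSpace Ω]
    (P : Measure Ω) [IsProbabilityMeasure P] (c : ℕ → ℝ) (hc : ∀ j, 0 < c j)
    (hsum : Summable (fun j => c j ^ 3))
    (ξ : ℕ → Ω → ℝ) (hmeas : ∀ j, Measurable (ξ j))
    (hindep : iIndepFun ξ P)
    (hdist : ∀ j, P.map (ξ j) = expMeasure (c j))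
    (s : ℝ) (hs : 0 ≤ s) :
    ∀ᵐ ω ∂P, ∃ L : ℝ,
      Tendsto
        (fun N => ∑ j ∈ Finset.range N,
          (c j * (if ξ j ω ≤ s then 1 else 0) - c j ^ 2 * s))
        atTop (𝓝 L) := by
  classical
  -- basic quantities
  set p : ℕ → ℝ := fun j => 1 - Real.exp (-(c j * s)) with hp_def
  set g : ℕ → ℝ → ℝ := fun j t => (if t ≤ s then c j else 0) - c j * p j with hg_def
  set X : ℕ → Ω → ℝ := fun j => g j ∘ ξ j with hX_def
  set m : ℕ → ℝ := fun j => c j * p j - c j ^ 2 * s with hm_def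
  have hp0 : ∀ j, 0 ≤ p j := by
    intro j
    have : Real.exp (-(c j * s)) ≤ 1 := Real.exp_le_one_iff.2 (by
      have := mul_nonneg (hc j).le hs; linarith)
    simp only [hp_def]; linarith
  have hp1 : ∀ j, p j ≤ 1 := by
    intro j
    have := Real.exp_pos (-(c j * s))
    simp only [hp_def]; linarith
  have hpx : ∀ j, p j ≤ c j * s := by
    intro j
    have := Real.add_one_le_exp (-(c j * s))
    simp only [hp_def]; linarith
  have hplow : ∀ j, c j * s - (c j * s) ^ 2 ≤ p j := by
    intro j
    set x := c j * s with hx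
    have hx0 : 0 ≤ x := mul_nonneg (hc j).le hs
    have h1 : (0:ℝ) < 1 + x := by linarith
    have h2 : Real.exp (-x) ≤ (1 + x)⁻¹ := by
      rw [Real.exp_neg]
      exact inv_anti₀ h1 (by linarith [Real.add_one_le_exp x])
    have h3 : (1 + x)⁻¹ ≤ 1 - x + x ^ 2 := by
      rw [inv_eq_one_div, div_le_iff₀ h1]; nlinarith
    simp only [hp_def]; linarith
  -- measurability
  have hgm : ∀ j, Measurable (g j) := by
    intro j
    exact (Measurable.ite measurableSet_Iic measurable_const measurable_const).sub
      measurable_const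
  have hXmeas : ∀ j, Measurable (X j) := fun j => (hgm j).comp (hmeas j)
  have hXsm : ∀ j, StronglyMeasurable (X j) := fun j => (hXmeas j).stronglyMeasurable
  -- the probability p j
  have hP : ∀ j, P (ξ j ⁻¹' Set.Iic s) = ENNReal.ofReal (p j) := by
    intro j
    have : IsProbabilityMeasure (expMeasure (c j)) := isProbabilityMeasure_expMeasure (hc j)
    rw [← Measure.map_apply (hmeas j) measurableSet_Iic, hdist j, ← ofReal_cdf]
    congr 1
    have h2 := cdf_expMeasure_eq (hc j) s
    rw [if_pos hs] at h2
    exact h2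
  -- the indicator integral
  have hind_eq : ∀ j, (fun ω => if ξ j ω ≤ s then c j else 0)
      = fun ω => (ξ j ⁻¹' Set.Iic s).indicator (fun _ => c j) ω := by
    intro j
    funext ω
    simp [Set.indicator_apply, Set.mem_preimage, Set.mem_Iic]
  have hfInt : ∀ j, Integrable (fun ω => if ξ j ω ≤ s then c j else 0) P := by
    intro j
    refine (MemLp.of_bound ?_ (c j) (ae_of_all _ fun ω => ?_)).integrable
      (le_top : (1:ENNReal) ≤ ⊤)
    · exact ((Measurable.ite measurableSet_Iic measurable_const measurable_const).comp
        (hmeas j)).aestronglyMeasurable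
    · by_cases h : ξ j ω ≤ s <;> simp [h, Real.norm_eq_abs, abs_of_nonneg (hc j).le, (hc j).le]
  have hfval : ∀ j, ∫ ω, (if ξ j ω ≤ s then c j else 0) ∂P = c j * p j := by
    intro j
    rw [hind_eq j, integral_indicator_const (c j) ((hmeas j) measurableSet_Iic), measureReal_def, hP j,
      ENNReal.toReal_ofReal (hp0 j), smul_eq_mul, mul_comm]
  -- integrability and moments of X
  have hXmem : ∀ j, ∀ q : ENNReal, MemLp (X j) q P := by
    intro j q
    refine MemLp.of_bound (hXsm j).aestronglyMeasurable (2 * c j) (ae_of_all _ fun ω => ?_)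
    have h1 : 0 ≤ c j * p j := mul_nonneg (hc j).le (hp0 j)
    have h2 : c j * p j ≤ c j := by nlinarith [hp1 j, (hc j).le]
    simp only [hX_def, hg_def, Function.comp_apply, Real.norm_eq_abs]
    rw [abs_le]
    constructor <;> by_cases h : ξ j ω ≤ s <;> simp [h] <;> nlinarith [(hc j).le]
  have hXint : ∀ j, Integrable (X j) P := fun j => (hXmem j 1).integrable le_rfl
  have hXzero : ∀ j, ∫ ω, X j ω ∂P = 0 := by
    intro j
    have : ∫ ω, X j ω ∂P
        = ∫ ω, (if ξ j ω ≤ s then c j else 0) ∂P - ∫ _, c j * p j ∂P := by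
      simp only [hX_def, hg_def, Function.comp_apply]
      exact integral_sub (hfInt j) (integrable_const _)
    rw [this, hfval j, integral_const, measureReal_def, measure_univ, ENNReal.toReal_one, one_smul, sub_self]
  -- variance bound
  have hvar : ∀ j, variance (X j) P ≤ s * c j ^ 3 := by
    intro j
    have hveq : variance (X j) P = ∫ ω, (X j ω) ^ 2 ∂P := by
      rw [variance_of_integral_eq_zero (hXmeas j).aemeasurable (hXzero j)]
    have hsq : ∀ ω, (X j ω) ^ 2
        = (c j - 2 * (c j * p j)) * (if ξ j ω ≤ s then c j else 0) + (c j * p j) ^ 2 := by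
      intro ω
      simp only [hX_def, hg_def, Function.comp_apply]
      by_cases h : ξ j ω ≤ s <;> simp [h] <;> ring
    have hint2 : ∫ ω, (X j ω) ^ 2 ∂P
        = (c j - 2 * (c j * p j)) * (c j * p j) + (c j * p j) ^ 2 := by
      simp_rw [hsq]
      rw [integral_add ((hfInt j).const_mul _) (integrable_const _), integral_const_mul,
        hfval j, integral_const, measureReal_def, measure_univ, ENNReal.toReal_one, one_smul]
    rw [hveq, hint2]
    nlinarith [hp0 j, hp1 j, hpx j, (hc j).le, sq_nonneg (c j), mul_nonneg (hc j).le (hp0 j)]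
  -- independence of X
  have hXindep : iIndepFun X P := hindep.comp g hgm
  have hXpair : ∀ i j, i ≠ j → IndepFun (X i) (X j) P := fun i j hij =>
    (hindep.indepFun hij).comp (hgm i) (hgm j)
  -- the martingale
  set N : ℕ → Ω → ℝ := fun n => ∑ j ∈ Finset.range (n + 1), X j with hN_def
  have hNfun : ∀ n, N n = fun ω => ∑ j ∈ Finset.range (n + 1), X j ω := by
    intro n; funext ω; simp [hN_def]
  set 𝒢 := Filtration.natural X hXsm with h𝒢_def
  have hadp : StronglyAdapted 𝒢 N := by
    intro n
    rw [hNfun n]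
    refine Finset.stronglyMeasurable_fun_sum _ fun j hj => ?_
    exact ((Filtration.stronglyAdapted_natural hXsm) j).mono
      (𝒢.mono (Nat.lt_succ_iff.mp (Finset.mem_range.mp hj)))
  have hNint : ∀ n, Integrable (N n) P := by
    intro n
    rw [hNfun n]
    exact integrable_finset_sum (Finset.range (n + 1)) (fun j _ => hXint j)
  have hmart : Martingale N 𝒢 P := by
    refine martingale_nat hadp hNint fun n => ?_
    have hsplit : N (n + 1) = N n + X (n + 1) := by
      simp [hN_def, Finset.sum_range_succ]
    have hcx : P[X (n + 1)|𝒢 n] =ᵐ[P] fun _ => ∫ ω, X (n + 1) ω ∂P :=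
      hXindep.condExp_natural_ae_eq_of_lt hXsm (Nat.lt_succ_self n)
    have h1 : P[N (n + 1)|𝒢 n] =ᵐ[P] P[N n|𝒢 n] + P[X (n + 1)|𝒢 n] := by
      rw [hsplit]; exact condExp_add (hNint n) (hXint (n + 1)) _
    have h2 : P[N n|𝒢 n] = N n :=
      condExp_of_stronglyMeasurable (𝒢.le n) (hadp n) (hNint n)
    filter_upwards [h1, hcx] with ω hω1 hω2
    rw [hω1, Pi.add_apply, h2, hω2, hXzero (n + 1), add_zero]
  -- L¹ boundedness
  set C : ℝ := s * ∑' j, c j ^ 3 with hC_def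
  have hC0 : 0 ≤ C := mul_nonneg hs (tsum_nonneg fun j => pow_nonneg (hc j).le 3)
  have hvarN : ∀ n, variance (N n) P ≤ C := by
    intro n
    have h1 : variance (N n) P = ∑ j ∈ Finset.range (n + 1), variance (X j) P := by
      rw [hN_def]
      exact IndepFun.variance_sum (fun j _ => hXmem j 2)
        (fun i _ j _ hij => hXpair i j hij)
    rw [h1]
    calc ∑ j ∈ Finset.range (n + 1), variance (X j) P
        ≤ ∑ j ∈ Finset.range (n + 1), s * c j ^ 3 :=
          Finset.sum_le_sum fun j _ => hvar j
      _ = s * ∑ j ∈ Finset.range (n + 1), c j ^ 3 := by rw [Finset.mul_sum]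
      _ ≤ C := by
          refine mul_le_mul_of_nonneg_left ?_ hs
          exact Summable.sum_le_tsum _ (fun j _ => pow_nonneg (hc j).le 3) hsum
  have hNmem : ∀ n, MemLp (N n) 2 P := by
    intro n
    have := memLp_finset_sum' (Finset.range (n + 1)) (fun j (_ : j ∈ Finset.range (n+1)) => hXmem j 2)
    simpa [hN_def] using this
  have hNzero : ∀ n, ∫ ω, N n ω ∂P = 0 := by
    intro n
    have : ∫ ω, N n ω ∂P = ∑ j ∈ Finset.range (n + 1), ∫ ω, X j ω ∂P := by
      rw [hNfun n]
      exact integral_finset_sum _ fun j _ => hXint j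
    rw [this]
    exact Finset.sum_eq_zero fun j _ => hXzero j
  set R : NNReal := (ENNReal.ofReal C ^ (1 / 2 : ℝ)).toNNReal with hR_def
  have hbdd : ∀ n, eLpNorm (N n) 1 P ≤ (R : ENNReal) := by
    intro n
    have h2 : eLpNorm (N n) 2 P = evariance (N n) P ^ (1 / 2 : ℝ) := by
      rw [eLpNorm_eq_lintegral_rpow_enorm_toReal two_ne_zero ENNReal.ofNat_ne_top]
      congr 1
      rw [evariance]
      simp_rw [hNzero n, sub_zero, ENNReal.toReal_ofNat, ENNReal.rpow_two]
    have h3 : evariance (N n) P ≤ ENNReal.ofReal C := by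
      rw [← (hNmem n).ofReal_variance_eq]
      exact ENNReal.ofReal_le_ofReal (hvarN n)
    have h4 : eLpNorm (N n) 2 P ≤ ENNReal.ofReal C ^ (1 / 2 : ℝ) := by
      rw [h2]; exact ENNReal.rpow_le_rpow h3 (by norm_num)
    have h5 : eLpNorm (N n) 1 P ≤ eLpNorm (N n) 2 P :=
      eLpNorm_le_eLpNorm_of_exponent_le (by norm_num) (hNmem n).aestronglyMeasurable
    refine (h5.trans h4).trans ?_
    rw [hR_def, ENNReal.coe_toNNReal]
    exact (ENNReal.rpow_lt_top_of_nonneg (by norm_num) ENNReal.ofReal_ne_top).ne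
  -- a.s. convergence of the martingale
  have hconv := (hmart.submartingale).exists_ae_tendsto_of_bdd hbdd
  -- summability of the deterministic part
  have hmabs : ∀ j, |m j| ≤ s ^ 2 * c j ^ 3 := by
    intro j
    have h1 := hpx j
    have h2 := hplow j
    have hc' := (hc j).le
    rw [abs_le]
    constructor <;> simp only [hm_def] <;> nlinarith
  have hmsum : Summable m := by
    refine Summable.of_abs (Summable.of_nonneg_of_le (fun j => abs_nonneg _) hmabs ?_)
    exact hsum.mul_left _
  have hmtend : Tendsto (fun n => ∑ j ∈ Finset.range n, m j) atTop (𝓝 (∑' j, m j)) :=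
    hmsum.hasSum.tendsto_sum_nat
  -- conclusion
  filter_upwards [hconv] with ω hω
  obtain ⟨L, hL⟩ := hω
  refine ⟨L + ∑' j, m j, ?_⟩
  have hL' : Tendsto (fun n => ∑ j ∈ Finset.range (n + 1), X j ω) atTop (𝓝 L) := by
    have : (fun n => N n ω) = fun n => ∑ j ∈ Finset.range (n + 1), X j ω := by
      funext n; rw [hNfun n]
    rwa [this] at hL
  have hshift : Tendsto (fun k => ∑ j ∈ Finset.range k, X j ω) atTop (𝓝 L) :=
    (tendsto_add_atTop_iff_nat 1).mp hL'
  have hfinal := hshift.add hmtend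
  have heq : (fun k => ∑ j ∈ Finset.range k, X j ω + ∑ j ∈ Finset.range k, m j)
      = fun k => ∑ j ∈ Finset.range k,
        (c j * (if ξ j ω ≤ s then 1 else 0) - c j ^ 2 * s) := by
    funext k
    rw [← Finset.sum_add_distrib]
    refine Finset.sum_congr rfl fun j _ => ?_
    simp only [hX_def, hg_def, hm_def, Function.comp_apply]
    by_cases h : ξ j ω ≤ s <;> simp [h] <;> ring
  rwa [heq] at hfinal
end

section
/- Let (c_j)_{j ≥ 1} be a nonincreasing sequence of strictly positive reals with Σ_{j ≥ 1} c_j³ = ∞, and let (ξ_j)_{j ≥ 1} be independent random variables with ξ_j exponentially distributed with rate c_j. Then for every fixed s > 0, the probability that the partial sums Σ_{j=1}^{N} ( c_j · 1{ ξ_j ≤ s } − c_j² · s ) converge to a finite limit as N → ∞ is zero. Together with the preceding statement, Σ_j c_j³ < ∞ is precisely the condition for the process V^c to be well defined. -/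
open MeasureTheory ProbabilityTheory Filter Topology

private lemma aux_one_sub_exp_le (x : ℝ) : 1 - Real.exp (-x) ≤ x := by
  have := Real.add_one_le_exp (-x); linarith

private lemma aux_pos {x : ℝ} (hx : 0 < x) : 0 < x - (1 - Real.exp (-x)) := by
  have := Real.add_one_lt_exp (x := -x) (neg_ne_zero.2 hx.ne')
  linarith

private lemma aux_quad {x : ℝ} (h0 : 0 ≤ x) (h1 : x ≤ 1) :
    x ^ 2 / 4 ≤ x - (1 - Real.exp (-x)) := by
  have habs : |(-x)| ≤ 1 := by rw [abs_neg, abs_of_nonneg h0]; exact h1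
  have hb := Real.exp_bound habs (n := 4) (by norm_num)
  have hsum : ∑ m ∈ Finset.range 4, (-x) ^ m / (Nat.factorial m : ℝ)
      = 1 - x + x ^ 2 / 2 - x ^ 3 / 6 := by
    simp [Finset.sum_range_succ, Nat.factorial]
    ring
  rw [hsum, abs_neg, abs_of_nonneg h0] at hb
  have hb' := (abs_sub_le_iff.1 hb).2
  have h3 : x ^ 3 ≤ x ^ 2 := by nlinarith
  have h4 : x ^ 4 ≤ x ^ 2 := by nlinarith
  norm_num [Nat.factorial] at hb'
  nlinarith

private lemma aux_mono {x y : ℝ} (h0 : 0 ≤ x) (hxy : x ≤ y) :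
    x - (1 - Real.exp (-x)) ≤ y - (1 - Real.exp (-y)) := by
  have h1 : Real.exp (-x) ≤ 1 := Real.exp_le_one_iff.2 (by linarith)
  have h2 : (x - y) + 1 ≤ Real.exp (x - y) := Real.add_one_le_exp _
  have h5 : Real.exp (x - y) ≤ 1 := Real.exp_le_one_iff.2 (by linarith)
  have h3 : Real.exp (-y) = Real.exp (-x) * Real.exp (x - y) := by
    rw [← Real.exp_add]; ring_nf
  nlinarith [Real.exp_pos (-x)]

/-- if `(c_j)` is a nonincreasing sequence of strictly positive reals with
`Σ_j c_j³ = ∞` and the `ξ_j` are independent exponentials with rates `c_j`, then for every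
fixed `s > 0` the probability that the partial sums
`Σ_{j<N} (c_j · 1{ξ_j ≤ s} − c_j² s)` converge to a finite limit is zero. Together with the
convergent case, `Σ_j c_j³ < ∞` is exactly the condition for `V^c` to be well defined. -/
theorem Vc_partial_sums_diverge_ae {Ω : Type*} [MeasurableSpace Ω]
    (P : Measure Ω) [IsProbabilityMeasure P] (c : ℕ → ℝ) (hc : ∀ j, 0 < c j)
    (hmono : Antitone c) (hsum : ¬ Summable (fun j => c j ^ 3))
    (ξ : ℕ → Ω → ℝ) (hmeas : ∀ j, Measurable (ξ j))
    (hindep : iIndepFun ξ P)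
    (hdist : ∀ j, P.map (ξ j) = expMeasure (c j))
    (s : ℝ) (hs : 0 < s) :
    P {ω | ∃ L : ℝ,
        Tendsto
          (fun N => ∑ j ∈ Finset.range N,
            (c j * (if ξ j ω ≤ s then 1 else 0) - c j ^ 2 * s))
          atTop (𝓝 L)} = 0 := by
  classical
  set p : ℕ → ℝ := fun j => 1 - Real.exp (-(c j * s)) with hp_def
  have hcs_pos : ∀ j, 0 < c j * s := fun j => mul_pos (hc j) hs
  have hp_nonneg : ∀ j, 0 ≤ p j := fun j => by
    have h := Real.exp_le_one_iff.2 (by linarith [hcs_pos j] : -(c j * s) ≤ 0)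
    simp only [hp_def]; linarith
  have hp_le_one : ∀ j, p j ≤ 1 := fun j => by
    have := (Real.exp_pos (-(c j * s))).le
    simp only [hp_def]; linarith
  set t : ℕ → ℝ := fun j => c j ^ 2 * s - c j * p j with ht_def
  have ht_eq : ∀ j, t j = c j * (c j * s - (1 - Real.exp (-(c j * s)))) := by
    intro j; simp only [ht_def, hp_def]; ring
  have ht_nonneg : ∀ j, 0 ≤ t j := fun j => by
    rw [ht_eq]
    exact mul_nonneg (hc j).le (by linarith [aux_one_sub_exp_le (c j * s)])
  -- partial sums of `t` tend to infinity
  have hnot_sum : ¬ Summable t := by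
    intro hsumm
    have hbdd0 : BddBelow (Set.range c) := ⟨0, fun x ⟨j, hj⟩ => hj ▸ (hc j).le⟩
    set ε := ⨅ j, c j with hε_def
    have hε0 : 0 ≤ ε := le_ciInf fun j => (hc j).le
    have hεle : ∀ j, ε ≤ c j := fun j => ciInf_le hbdd0 j
    rcases hε0.eq_or_lt with hε | hε
    · -- c tends to 0
      have hc0 : Tendsto c atTop (𝓝 0) := by
        have := tendsto_atTop_ciInf hmono hbdd0
        rwa [← hε_def, ← hε] at this
      have hev : ∀ᶠ j in atTop, c j < 1 / s :=
        hc0.eventually_lt_const (by positivity)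
      obtain ⟨N, hN⟩ := eventually_atTop.1 hev
      apply hsum
      have hle : ∀ j, c (j + N) ^ 3 * (s ^ 2 / 4) ≤ t (j + N) := by
        intro j
        have h1 : c (j + N) * s ≤ 1 := by
          have := hN (j + N) (Nat.le_add_left N j)
          rw [lt_div_iff₀ hs] at this
          linarith
        have h2 := aux_quad (x := c (j + N) * s) (hcs_pos (j + N)).le h1
        rw [ht_eq]
        calc c (j + N) ^ 3 * (s ^ 2 / 4) = c (j + N) * ((c (j + N) * s) ^ 2 / 4) := by ring
          _ ≤ c (j + N) * (c (j + N) * s - (1 - Real.exp (-(c (j + N) * s)))) :=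
            mul_le_mul_of_nonneg_left h2 (hc _).le
      have hsub : Summable (fun j => t (j + N)) := (summable_nat_add_iff N).2 hsumm
      have hcomp : Summable (fun j => c (j + N) ^ 3 * (s ^ 2 / 4)) :=
        Summable.of_nonneg_of_le
          (fun j => mul_nonneg (pow_nonneg (hc _).le 3) (by positivity)) hle hsub
      have : Summable (fun j => c (j + N) ^ 3) := by
        have := hcomp.mul_right (4 / s ^ 2)
        refine this.congr fun j => ?_
        field_simp
      exact (summable_nat_add_iff N).1 this
    · -- ε > 0 : terms bounded below by a positive constant
      set δ := ε * (ε * s - (1 - Real.exp (-(ε * s)))) with hδ_def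
      have hδ : 0 < δ := mul_pos hε (aux_pos (mul_pos hε hs))
      have hlb : ∀ j, δ ≤ t j := by
        intro j
        have h2 : ε * s ≤ c j * s := mul_le_mul_of_nonneg_right (hεle j) hs.le
        have h3 := aux_mono (x := ε * s) (y := c j * s) (by positivity) h2
        have h4 : 0 < ε * s - (1 - Real.exp (-(ε * s))) := aux_pos (mul_pos hε hs)
        rw [ht_eq, hδ_def]
        nlinarith [hεle j]
      have hterm := hsumm.tendsto_atTop_zero
      obtain ⟨j, hj⟩ := (hterm.eventually_lt_const hδ).exists
      linarith [hlb j]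
  have hT : Tendsto (fun N => ∑ j ∈ Finset.range N, t j) atTop atTop :=
    (not_summable_iff_tendsto_nat_atTop_of_nonneg ht_nonneg).1 hnot_sum
  -- the martingale
  have hSM : ∀ j, StronglyMeasurable (ξ j) := fun j => (hmeas j).stronglyMeasurable
  set ℱ := MeasureTheory.Filtration.natural ξ hSM with hℱ_def
  set g : ℕ → Ω → ℝ := fun j ω => c j * ((if ξ j ω ≤ s then 1 else 0) - p j) with hg_def
  set f : ℕ → Ω → ℝ := fun n ω => ∑ j ∈ Finset.range (n + 1), g j ω with hf_def
  have hψ : ∀ j, Measurable (fun x : ℝ => c j * ((if x ≤ s then (1:ℝ) else 0) - p j)) := by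
    intro j
    exact ((Measurable.ite measurableSet_Iic measurable_const measurable_const).sub
      measurable_const).const_mul _
  have hcomap_meas : ∀ j,
      Measurable[MeasurableSpace.comap (ξ j) inferInstance] (g j) := by
    intro j
    exact (hψ j).comp (Measurable.of_comap_le le_rfl)
  have hA : ∀ j, MeasurableSet {ω | ξ j ω ≤ s} := fun j => hmeas j measurableSet_Iic
  have hBint : ∀ j, Integrable (fun ω => (if ξ j ω ≤ s then (1:ℝ) else 0)) P := by
    intro j
    have : (fun ω => (if ξ j ω ≤ s then (1:ℝ) else 0))
        = {ω | ξ j ω ≤ s}.indicator (fun _ => (1:ℝ)) := by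
      funext ω; simp [Set.indicator_apply]
    rw [this]
    exact (integrable_const (1:ℝ)).indicator (hA j)
  have hgint : ∀ j, Integrable (g j) P := by
    intro j
    exact (((hBint j).sub (integrable_const (p j))).const_mul (c j))
  have hfint : ∀ n, Integrable (f n) P := fun n =>
    integrable_finset_sum _ (fun j _ => hgint j)
  have hPA : ∀ j, P {ω | ξ j ω ≤ s} = ENNReal.ofReal (p j) := by
    intro j
    have h1 : {ω | ξ j ω ≤ s} = ξ j ⁻¹' Set.Iic s := rfl
    rw [h1, ← Measure.map_apply (hmeas j) measurableSet_Iic, hdist j]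
    haveI := isProbabilityMeasure_expMeasure (hc j)
    rw [← ofReal_cdf (expMeasure (c j)) s]
    congr 1
    rw [cdf_expMeasure_eq (hc j) s, if_pos hs.le]
  have hgmean : ∀ j, ∫ ω, g j ω ∂P = 0 := by
    intro j
    have hBind : (fun ω => (if ξ j ω ≤ s then (1:ℝ) else 0))
        = {ω | ξ j ω ≤ s}.indicator (fun _ => (1:ℝ)) := by
      funext ω; simp [Set.indicator_apply]
    have hB : ∫ ω, (if ξ j ω ≤ s then (1:ℝ) else 0) ∂P = p j := by
      rw [hBind, integral_indicator_const (1:ℝ) (hA j), measureReal_def, hPA j, smul_eq_mul, mul_one,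
        ENNReal.toReal_ofReal (hp_nonneg j)]
    simp only [hg_def]
    rw [integral_const_mul, integral_sub (hBint j) (integrable_const _), hB,
      integral_const]
    simp
  have hadapted : StronglyAdapted ℱ f := by
    intro n
    apply Finset.stronglyMeasurable_fun_sum
    intro i hi
    have hin : i ≤ n := Nat.lt_succ_iff.mp (Finset.mem_range.mp hi)
    have hle : MeasurableSpace.comap (ξ i) inferInstance ≤ ℱ n := by
      rw [hℱ_def]
      exact le_iSup₂ (f := fun j (_ : j ≤ n) =>
        MeasurableSpace.comap (ξ j) inferInstance) i hin
    exact ((hcomap_meas i).mono hle le_rfl).stronglyMeasurable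
  have hmart : Martingale f ℱ P := by
    refine martingale_nat hadapted hfint fun n => ?_
    have hsucc : f (n + 1) = f n + g (n + 1) := by
      funext ω; simp [hf_def, Finset.sum_range_succ]
    have hindep' : Indep (MeasurableSpace.comap (ξ (n + 1)) inferInstance) (ℱ n) P :=
      hindep.indep_comap_natural_of_lt hSM (Nat.lt_succ_self n)
    have hce : P[g (n + 1)|ℱ n] =ᵐ[P] fun _ => ∫ ω, g (n + 1) ω ∂P :=
      condExp_indep_eq (hmeas (n + 1)).comap_le (ℱ.le n)
        (hcomap_meas (n + 1)).stronglyMeasurable hindep'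
    have hfn : P[f n|ℱ n] = f n :=
      condExp_of_stronglyMeasurable (ℱ.le n) (hadapted n) (hfint n)
    calc f n = f n + fun _ => (0:ℝ) := by funext ω; simp
      _ =ᵐ[P] P[f n|ℱ n] + P[g (n + 1)|ℱ n] := by
          rw [hfn, hgmean (n + 1)] at *
          filter_upwards [hce] with ω hω
          simp [hω]
      _ =ᵐ[P] P[f n + g (n + 1)|ℱ n] := (condExp_add (hfint n) (hgint (n + 1)) _).symm
      _ =ᵐ[P] P[f (n + 1)|ℱ n] := by rw [hsucc]
  have hbdd : ∀ᵐ ω ∂P, ∀ n, |f (n + 1) ω - f n ω| ≤ ((c 0).toNNReal : ℝ) := by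
    refine ae_of_all _ fun ω n => ?_
    have hdiff : f (n + 1) ω - f n ω = g (n + 1) ω := by
      simp [hf_def, Finset.sum_range_succ]
    rw [hdiff, Real.coe_toNNReal _ (hc 0).le]
    have h1 : |(if ξ (n + 1) ω ≤ s then (1:ℝ) else 0) - p (n + 1)| ≤ 1 := by
      split_ifs <;> rw [abs_le] <;>
        constructor <;> linarith [hp_nonneg (n + 1), hp_le_one (n + 1)]
    calc |g (n + 1) ω| = c (n + 1) * |(if ξ (n + 1) ω ≤ s then (1:ℝ) else 0) - p (n + 1)| := by
          rw [hg_def]; rw [abs_mul, abs_of_nonneg (hc _).le]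
      _ ≤ c (n + 1) * 1 := mul_le_mul_of_nonneg_left h1 (hc _).le
      _ ≤ c 0 := by rw [mul_one]; exact hmono (Nat.zero_le _)
  have hmain := hmart.ae_not_tendsto_atTop_atTop hbdd
  rw [ae_iff] at hmain
  simp only [not_not] at hmain
  refine measure_mono_null ?_ hmain
  rintro ω ⟨L, hL⟩
  show Tendsto (fun n => f n ω) atTop atTop
  have hfeq : ∀ n, f n ω
      = (∑ j ∈ Finset.range (n + 1), (c j * (if ξ j ω ≤ s then 1 else 0) - c j ^ 2 * s))
        + ∑ j ∈ Finset.range (n + 1), t j := by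
    intro n
    rw [hf_def, ← Finset.sum_add_distrib]
    refine Finset.sum_congr rfl fun j _ => ?_
    simp only [hg_def, ht_def]
    ring
  simp only [hfeq]
  exact Tendsto.add_atTop (hL.comp (tendsto_add_atTop_nat 1)) (hT.comp (tendsto_add_atTop_nat 1))
end

section
/- Let κ > 0 and let (c_j)_{j ≥ 1} be a nonincreasing sequence of nonnegative reals with C := Σ_j c_j³ < ∞. For n ≥ 1 and l ∈ ℕ, let x^{(n,l)} be the finite vector consisting of the entries c_1 κ^{-2/3} n^{-1/3}, …, c_l κ^{-2/3} n^{-1/3} followed by n entries equal to κ^{-1/3} n^{-2/3}. Then there exists a sequence l(n) → ∞ such that, writing x^{(n)} = x^{(n, l(n))} and σ_r = Σ_i (x_i^{(n)})^r: (i) σ_2 → 0; (ii) σ_3 / σ_2³ → κ + C; and (iii) x_j^{(n)} / σ_2 → c_j for every fixed j ≥ 1, as n → ∞. -/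
open Filter Topology

/-- The `j`-th entry of the configuration `x^{(n,l)}`: the first `l` entries are
`c_j κ^{-2/3} n^{-1/3}` and the following `n` entries are `κ^{-1/3} n^{-2/3}`. -/
noncomputable def mixEntry (κ : ℝ) (c : ℕ → ℝ) (l n j : ℕ) : ℝ :=
  if j < l then c j * κ ^ (-(2 : ℝ) / 3) * (n : ℝ) ^ (-(1 : ℝ) / 3)
  else κ ^ (-(1 : ℝ) / 3) * (n : ℝ) ^ (-(2 : ℝ) / 3)

/-- `σ_r(x^{(n,l)})`, the sum of the `r`-th powers of the `l + n` entries of `x^{(n,l)}`. -/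
noncomputable def mixSigma (κ : ℝ) (c : ℕ → ℝ) (r l n : ℕ) : ℝ :=
  ∑ j ∈ Finset.range (l + n), mixEntry κ c l n j ^ r

lemma mixSigma_eq (κ : ℝ) (c : ℕ → ℝ) (r l n : ℕ) :
    mixSigma κ c r l n =
      (∑ j ∈ Finset.range l, c j ^ r) * (κ ^ (-(2:ℝ)/3) * (n:ℝ) ^ (-(1:ℝ)/3)) ^ r
        + (n:ℝ) * (κ ^ (-(1:ℝ)/3) * (n:ℝ) ^ (-(2:ℝ)/3)) ^ r := by
  unfold mixSigma mixEntry
  rw [Finset.range_eq_Ico, ← Finset.sum_Ico_consecutive _ (Nat.zero_le l) (Nat.le_add_right l n)]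
  congr 1
  · rw [← Finset.range_eq_Ico, Finset.sum_mul]
    refine Finset.sum_congr rfl fun j hj => ?_
    rw [if_pos (Finset.mem_range.mp hj), mul_assoc, mul_pow]
  · rw [Finset.sum_congr rfl (fun j hj => ?_), Finset.sum_const, Nat.card_Ico,
      Nat.add_sub_cancel_left, nsmul_eq_mul]
    rw [if_neg]
    exact fun h => absurd (Finset.mem_Ico.mp hj).1 (not_le.mpr h)

lemma nat_rpow_pow (n : ℕ) (k : ℕ) :
    ((n:ℝ) ^ (-(1:ℝ)/3)) ^ k = (n:ℝ) ^ (-(k:ℝ)/3) := by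
  rw [← Real.rpow_natCast ((n:ℝ) ^ (-(1:ℝ)/3)) k, ← Real.rpow_mul (Nat.cast_nonneg n)]
  congr 1
  ring

lemma nat_mul_rpow (n : ℕ) (hn : 1 ≤ n) (a b : ℝ) (hab : 1 + a = b) :
    (n:ℝ) * (n:ℝ) ^ a = (n:ℝ) ^ b := by
  have h : (0:ℝ) < n := by exact_mod_cast hn
  rw [← hab, Real.rpow_add h, Real.rpow_one]

/-- for `κ > 0` and a nonincreasing nonnegative cube-summable sequence `c`
with `C = Σ_j c_j³`, there is `l(n) → ∞` such that, with `x^{(n)} = x^{(n, l(n))}`: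
(i) `σ₂ → 0`; (ii) `σ₃ / σ₂³ → κ + C`; (iii) `x_j^{(n)} / σ₂ → c_j` for every fixed `j`. -/
theorem mixConfig_entrance_asymptotics (κ : ℝ) (hκ : 0 < κ) (c : ℕ → ℝ)
    (hmono : Antitone c) (hnonneg : ∀ j, 0 ≤ c j) (hsum : Summable (fun j => c j ^ 3)) :
    ∃ l : ℕ → ℕ, Tendsto l atTop atTop ∧
      Tendsto (fun n : ℕ => mixSigma κ c 2 (l n) n) atTop (𝓝 0) ∧
      Tendsto (fun n : ℕ => mixSigma κ c 3 (l n) n / (mixSigma κ c 2 (l n) n) ^ 3) atTop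
        (𝓝 (κ + ∑' j, c j ^ 3)) ∧
      ∀ j : ℕ,
        Tendsto (fun n : ℕ => mixEntry κ c (l n) n j / mixSigma κ c 2 (l n) n) atTop
          (𝓝 (c j)) := by
  classical
  set l : ℕ → ℕ := fun n => Nat.sqrt (Nat.sqrt n) with hl_def
  set K : ℝ := κ ^ (-(1:ℝ)/3) with hK_def
  set T : ℕ → ℝ := fun n => (n:ℝ) ^ (-(1:ℝ)/3) with hT_def
  set S2 : ℕ → ℝ := fun m => ∑ j ∈ Finset.range m, c j ^ 2 with hS2_def
  set S3 : ℕ → ℝ := fun m => ∑ j ∈ Finset.range m, c j ^ 3 with hS3_def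
  set C : ℝ := ∑' j, c j ^ 3 with hC_def
  have hKpos : 0 < K := Real.rpow_pos_of_pos hκ _
  have hK2 : κ ^ (-(2:ℝ)/3) = K ^ 2 := by
    rw [hK_def, ← Real.rpow_natCast (κ ^ (-(1:ℝ)/3)) 2, ← Real.rpow_mul hκ.le]
    norm_num
  have hK3 : K ^ 3 = κ⁻¹ := by
    rw [hK_def, ← Real.rpow_natCast (κ ^ (-(1:ℝ)/3)) 3, ← Real.rpow_mul hκ.le]
    norm_num [Real.rpow_neg_one]
  have hK6 : K ^ 6 = κ⁻¹ * κ⁻¹ := by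
    rw [show (6:ℕ) = 3 + 3 from rfl, pow_add, hK3]
  have hTpos : ∀ n : ℕ, 1 ≤ n → 0 < T n := fun n hn =>
    Real.rpow_pos_of_pos (by exact_mod_cast hn) _
  have hTnonneg : ∀ n : ℕ, 0 ≤ T n := fun n => Real.rpow_nonneg (Nat.cast_nonneg n) _
  have hS2nonneg : ∀ m, 0 ≤ S2 m :=
    fun m => Finset.sum_nonneg fun j _ => sq_nonneg _
  -- closed forms
  have hσ2 : ∀ n : ℕ, 1 ≤ n →
      mixSigma κ c 2 (l n) n = T n * (K^4 * (T n * S2 (l n)) + K^2) := by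
    intro n hn
    rw [mixSigma_eq, hK2]
    have hT2 : (n:ℝ) ^ (-(2:ℝ)/3) = T n ^ 2 := by
      rw [hT_def, nat_rpow_pow]; norm_num
    have e4 : T n ^ 4 = (n:ℝ) ^ (-(4:ℝ)/3) := by
      rw [hT_def, nat_rpow_pow]; norm_num
    have hnT4 : (n:ℝ) * T n ^ 4 = T n := by
      rw [e4, nat_mul_rpow n hn (-(4:ℝ)/3) (-(1:ℝ)/3) (by norm_num), hT_def]
    rw [hT2]
    calc S2 (l n) * (K ^ 2 * T n) ^ 2 + (n:ℝ) * (K * T n ^ 2) ^ 2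
        = K^4 * (T n * S2 (l n)) * T n + K^2 * ((n:ℝ) * T n ^ 4) := by ring
      _ = T n * (K^4 * (T n * S2 (l n)) + K^2) := by rw [hnT4]; ring
  have hσ3 : ∀ n : ℕ, 1 ≤ n →
      mixSigma κ c 3 (l n) n = T n ^ 3 * (S3 (l n) * K^6 + K^3) := by
    intro n hn
    rw [mixSigma_eq, hK2]
    have hT2 : (n:ℝ) ^ (-(2:ℝ)/3) = T n ^ 2 := by
      rw [hT_def, nat_rpow_pow]; norm_num
    have e6 : T n ^ 6 = (n:ℝ) ^ (-(6:ℝ)/3) := by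
      rw [hT_def, nat_rpow_pow]; norm_num
    have e3 : T n ^ 3 = (n:ℝ) ^ (-(3:ℝ)/3) := by
      rw [hT_def, nat_rpow_pow]; norm_num
    have hnT6 : (n:ℝ) * T n ^ 6 = T n ^ 3 := by
      rw [e6, nat_mul_rpow n hn (-(6:ℝ)/3) (-(3:ℝ)/3) (by norm_num), ← e3]
    rw [hT2]
    calc S3 (l n) * (K ^ 2 * T n) ^ 3 + (n:ℝ) * (K * T n ^ 2) ^ 3
        = S3 (l n) * K^6 * T n ^ 3 + K^3 * ((n:ℝ) * T n ^ 6) := by ring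
      _ = T n ^ 3 * (S3 (l n) * K^6 + K^3) := by rw [hnT6]; ring
  -- tendsto facts
  have hsqrt : Tendsto Nat.sqrt atTop atTop :=
    tendsto_atTop_atTop.2 fun b => ⟨b*b, fun a ha => Nat.le_sqrt.mpr ha⟩
  have hl_tendsto : Tendsto l atTop atTop := hsqrt.comp hsqrt
  have hcast : Tendsto (fun n : ℕ => (n:ℝ)) atTop atTop := tendsto_natCast_atTop_atTop
  have hT0 : Tendsto T atTop (𝓝 0) := by
    have := (tendsto_rpow_neg_atTop (show (0:ℝ) < 1/3 by norm_num)).comp hcast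
    simpa [hT_def, Function.comp_def, neg_div] using this
  have hu : Tendsto (fun n => T n * S2 (l n)) atTop (𝓝 0) := by
    have hg : Tendsto (fun n : ℕ => c 0 ^ 2 * (n:ℝ) ^ (-(1:ℝ)/12)) atTop (𝓝 0) := by
      have := ((tendsto_rpow_neg_atTop (show (0:ℝ) < 1/12 by norm_num)).comp hcast).const_mul
        (c 0 ^ 2)
      simpa [Function.comp, neg_div] using this
    refine squeeze_zero' ?_ ?_ hg
    · exact Eventually.of_forall fun n => mul_nonneg (hTnonneg n) (hS2nonneg _)
    · filter_upwards [eventually_ge_atTop 1] with n hn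
      have hn0 : (0:ℝ) < n := by exact_mod_cast hn
      have hb1 : S2 (l n) ≤ (l n : ℝ) * c 0 ^ 2 := by
        have := Finset.sum_le_card_nsmul (Finset.range (l n)) (fun j => c j ^ 2) (c 0 ^ 2)
          (fun j _ => pow_le_pow_left₀ (hnonneg j) (hmono (Nat.zero_le j)) 2)
        simpa [nsmul_eq_mul] using this
      have hb2 : (l n : ℝ) ≤ (n:ℝ) ^ ((1:ℝ)/4) := by
        have h1 : (Nat.sqrt (Nat.sqrt n) : ℝ) ≤ Real.sqrt (Nat.sqrt n) := by
          rw [Real.le_sqrt (Nat.cast_nonneg _) (Nat.cast_nonneg _)]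
          exact_mod_cast Nat.sqrt_le' (Nat.sqrt n)
        have h2 : (Nat.sqrt n : ℝ) ≤ Real.sqrt n := by
          rw [Real.le_sqrt (Nat.cast_nonneg _) (Nat.cast_nonneg _)]
          exact_mod_cast Nat.sqrt_le' n
        have h3 : Real.sqrt (Nat.sqrt n) ≤ Real.sqrt (Real.sqrt n) := Real.sqrt_le_sqrt h2
        have h4 : Real.sqrt (Real.sqrt n) = (n:ℝ) ^ ((1:ℝ)/4) := by
          rw [Real.sqrt_eq_rpow, Real.sqrt_eq_rpow, ← Real.rpow_mul (Nat.cast_nonneg n)]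
          norm_num
        calc (l n : ℝ) ≤ Real.sqrt (Nat.sqrt n) := h1
          _ ≤ Real.sqrt (Real.sqrt n) := h3
          _ = (n:ℝ) ^ ((1:ℝ)/4) := h4
      have hTexp : T n * (n:ℝ) ^ ((1:ℝ)/4) = (n:ℝ) ^ (-(1:ℝ)/12) := by
        rw [hT_def, ← Real.rpow_add hn0]
        norm_num
      calc T n * S2 (l n) ≤ T n * ((l n : ℝ) * c 0 ^ 2) :=
            mul_le_mul_of_nonneg_left hb1 (hTnonneg n)
        _ ≤ T n * ((n:ℝ) ^ ((1:ℝ)/4) * c 0 ^ 2) := by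
            refine mul_le_mul_of_nonneg_left ?_ (hTnonneg n)
            exact mul_le_mul_of_nonneg_right hb2 (sq_nonneg _)
        _ = c 0 ^ 2 * (T n * (n:ℝ) ^ ((1:ℝ)/4)) := by ring
        _ = c 0 ^ 2 * (n:ℝ) ^ (-(1:ℝ)/12) := by rw [hTexp]
  have hS3t : Tendsto (fun n => S3 (l n)) atTop (𝓝 C) :=
    hsum.hasSum.tendsto_sum_nat.comp hl_tendsto
  have hden : Tendsto (fun n => K^4 * (T n * S2 (l n)) + K^2) atTop (𝓝 (K^2)) := by
    have := (hu.const_mul (K^4)).add (tendsto_const_nhds (x := K^2))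
    simpa using this
  refine ⟨l, hl_tendsto, ?_, ?_, ?_⟩
  · -- (i)
    have h2 : Tendsto (fun n => T n * (K^4 * (T n * S2 (l n)) + K^2)) atTop (𝓝 0) := by
      have := hT0.mul hden
      simpa using this
    refine h2.congr' ?_
    filter_upwards [eventually_ge_atTop 1] with n hn
    exact (hσ2 n hn).symm
  · -- (ii)
    have hnum : Tendsto (fun n => S3 (l n) * K^6 + K^3) atTop (𝓝 (C * K^6 + K^3)) :=
      (hS3t.mul_const _).add tendsto_const_nhds
    have hden3 : Tendsto (fun n => (K^4 * (T n * S2 (l n)) + K^2)^3) atTop (𝓝 ((K^2)^3)) :=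
      hden.pow 3
    have hdne : ((K:ℝ)^2)^3 ≠ 0 := by positivity
    have hval : (C * K^6 + K^3) / (K^2)^3 = κ + C := by
      rw [show ((K:ℝ)^2)^3 = K^6 by ring, hK6, hK3]
      field_simp
      ring
    have hratio : Tendsto (fun n => (S3 (l n) * K^6 + K^3) / (K^4 * (T n * S2 (l n)) + K^2)^3)
        atTop (𝓝 (κ + C)) := by
      rw [← hval]; exact hnum.div hden3 hdne
    refine hratio.congr' ?_
    filter_upwards [eventually_ge_atTop 1] with n hn
    rw [hσ2 n hn, hσ3 n hn, mul_pow, mul_div_mul_left _ _ (pow_ne_zero 3 (hTpos n hn).ne')]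
  · -- (iii)
    intro j
    have hK2ne : (K:ℝ)^2 ≠ 0 := by positivity
    have hlim : Tendsto (fun n => (c j * K^2) / (K^4 * (T n * S2 (l n)) + K^2)) atTop
        (𝓝 (c j)) := by
      have h := Tendsto.div (f := fun _ : ℕ => c j * K^2)
        (g := fun n => K^4 * (T n * S2 (l n)) + K^2) tendsto_const_nhds hden hK2ne
      have hval : (c j * K^2) / K^2 = c j := by field_simp
      rwa [hval] at h
    refine hlim.congr' ?_
    filter_upwards [eventually_ge_atTop 1, hl_tendsto.eventually_gt_atTop j] with n hn hjn
    rw [hσ2 n hn, mixEntry, if_pos hjn, hK2,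
      show c j * K^2 * ((n:ℝ) ^ (-(1:ℝ)/3)) = T n * (c j * K^2) by rw [hT_def]; ring,
      mul_div_mul_left _ _ (hTpos n hn).ne']
end
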